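/- Let d be a positive integer and let G₁, G₂ be finite groups. If F₁ is a topologically transitive GCA on G₁^{Z^d} and F₂ is a topologically transitive GCA on G₂^{Z^d}, then the product map F₁ × F₂ : G₁^{Z^d} × G₂^{Z^d} → G₁^{Z^d} × G₂^{Z^d}, (c₁, c₂) ↦ (F₁(c₁), F₂(c₂)), is topologically transitive on the product space with the product topology. -/

import Mathlib

/-- A self-map `T` of a topological space `X` is topologically transitive if for all
nonempty open sets `U, V ⊆ X` there exists `n ≥ 0` with `T^n(U) ∩ V ≠ ∅`. -/
def TopologicallyTransitive {X : Type*} [TopologicalSpace X] (T : X → X) : Prop :=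
  ∀ U V : Set X, IsOpen U → IsOpen V → U.Nonempty → V.Nonempty →
    ∃ n : ℕ, (T^[n] '' U ∩ V).Nonempty

section Aux

variable {d : ℕ} {G : Type*} [Group G]

/-- iterates of a homomorphism are homomorphisms -/
lemma iter_hom (F : ((Fin d → ℤ) → G) → ((Fin d → ℤ) → G))
    (hhom : ∀ a b, F (a * b) = F a * F b) :
    ∀ (n : ℕ) (a b), F^[n] (a * b) = F^[n] a * F^[n] b := by
  intro n
  induction n with
  | zero => intro a b; simp
  | succ n ih =>
    intro a b
    simp only [Function.iterate_succ_apply']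
    rw [ih a b, hhom]

lemma hom_one (F : ((Fin d → ℤ) → G) → ((Fin d → ℤ) → G))
    (hhom : ∀ a b, F (a * b) = F a * F b) : F 1 = 1 := by
  have h := hhom 1 1
  rw [mul_one] at h
  exact (mul_eq_right.mp h.symm)

lemma iter_one (F : ((Fin d → ℤ) → G) → ((Fin d → ℤ) → G))
    (hhom : ∀ a b, F (a * b) = F a * F b) :
    ∀ n : ℕ, F^[n] (1 : (Fin d → ℤ) → G) = 1 := by
  intro n
  induction n with
  | zero => simp
  | succ n ih => simp only [Function.iterate_succ_apply', ih, hom_one F hhom]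

lemma iter_cont (F : ((Fin d → ℤ) → G) → ((Fin d → ℤ) → G)) [TopologicalSpace G]
    (hcont : Continuous F) : ∀ n : ℕ, Continuous (F^[n]) := by
  intro n
  induction n with
  | zero => simpa using continuous_id
  | succ n ih =>
    rw [Function.iterate_succ]
    exact ih.comp hcont

/-- the projection onto a finite window -/
def proj (A : Finset (Fin d → ℤ)) : ((Fin d → ℤ) → G) → (↥A → G) := fun x a => x (a : Fin d → ℤ)

lemma proj_cont [TopologicalSpace G] (A : Finset (Fin d → ℤ)) :
    Continuous (proj (G := G) A) :=
  continuous_pi fun a => continuous_apply _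

lemma infinite_V (hd : 0 < d) : Infinite (Fin d → ℤ) := by
  have : Nonempty (Fin d) := ⟨⟨0, hd⟩⟩
  exact Infinite.of_injective (fun n : ℤ => (fun _ => n : Fin d → ℤ))
    (by intro a b h; exact congrFun h ⟨0, hd⟩)

/-- a transitive continuous endomorphism is surjective -/
lemma trans_surj (hd : 0 < d) [Finite G] [TopologicalSpace G] [DiscreteTopology G]
    (F : ((Fin d → ℤ) → G) → ((Fin d → ℤ) → G))
    (hcont : Continuous F)
    (htrans : TopologicallyTransitive F) :
    Function.Surjective F := by
  classical
  rcases subsingleton_or_nontrivial G with hG | hG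
  · have : Subsingleton ((Fin d → ℤ) → G) :=
      ⟨fun a b => funext fun v => Subsingleton.elim _ _⟩
    intro y; exact ⟨y, Subsingleton.elim _ _⟩
  by_contra hns
  simp only [Function.Surjective, not_forall] at hns
  obtain ⟨y, hy⟩ := hns
  rw [not_exists] at hy
  have hclosed : IsClosed (Set.range F) := (isCompact_range hcont).isClosed
  have hopen : IsOpen (Set.range F)ᶜ := hclosed.isOpen_compl
  have hymem : y ∈ (Set.range F)ᶜ := by
    intro h; obtain ⟨t, ht⟩ := h; exact hy t ht
  obtain ⟨I, u, hu, hsub⟩ := isOpen_pi_iff.mp hopen y hymem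
  have hinf : Infinite (Fin d → ℤ) := infinite_V hd
  obtain ⟨w, hw⟩ := Infinite.exists_notMem_finset I
  obtain ⟨g, hg⟩ := exists_ne (1 : G)
  set x' : (Fin d → ℤ) → G := Function.update y w (y w * g) with hx'
  set J : Finset (Fin d → ℤ) := insert w I with hJ
  set U : Set ((Fin d → ℤ) → G) := (proj J) ⁻¹' {proj J y} with hU
  set Vs : Set ((Fin d → ℤ) → G) := (proj J) ⁻¹' {proj J x'} with hVs
  have hUopen : IsOpen U := (proj_cont J).isOpen_preimage _ (isOpen_discrete _)
  have hVopen : IsOpen Vs := (proj_cont J).isOpen_preimage _ (isOpen_discrete _)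
  have hUV : U ∩ Vs = ∅ := by
    ext z
    simp only [Set.mem_inter_iff, Set.mem_empty_iff_false, iff_false]
    rintro ⟨h1, h2⟩
    have e1 : z w = y w := congrFun (h1 : proj J z = proj J y) ⟨w, Finset.mem_insert_self w I⟩
    have e2 : z w = x' w := congrFun (h2 : proj J z = proj J x') ⟨w, Finset.mem_insert_self w I⟩
    rw [e1, hx', Function.update_self] at e2
    exact hg (mul_eq_left.mp e2.symm)
  have hUc : U ⊆ (Set.range F)ᶜ := by
    intro z hz
    apply hsub
    intro i hi
    have : z i = y i := congrFun (hz : proj J z = proj J y) ⟨i, Finset.mem_insert_of_mem hi⟩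
    rw [this]
    exact (hu i hi).2
  have hVc : Vs ⊆ (Set.range F)ᶜ := by
    intro z hz
    apply hsub
    intro i hi
    have hi' : i ≠ w := by rintro rfl; exact hw hi
    have : z i = x' i := congrFun (hz : proj J z = proj J x') ⟨i, Finset.mem_insert_of_mem hi⟩
    rw [this, hx', Function.update_of_ne hi']
    exact (hu i hi).2
  obtain ⟨n, z, ⟨t, htU, rfl⟩, hzV⟩ :=
    htrans U Vs hUopen hVopen ⟨y, rfl⟩ ⟨x', rfl⟩
  cases n with
  | zero =>
    have : t ∈ U ∩ Vs := ⟨htU, by simpa using hzV⟩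
    rw [hUV] at this; exact this
  | succ n =>
    apply hVc hzV
    exact ⟨F^[n] t, (Function.iterate_succ_apply' F n t).symm⟩

/-- extension of a partial pattern -/
noncomputable def patExt (A : Finset (Fin d → ℤ)) (a₀ : ↥A → G) : (Fin d → ℤ) → G := by
  classical
  exact fun v => if h : v ∈ A then a₀ ⟨v, h⟩ else 1

lemma proj_patExt (A : Finset (Fin d → ℤ)) (a₀ : ↥A → G) :
    proj A (patExt A a₀) = a₀ := by
  classical
  funext a
  simp [proj, patExt, a.2]

/-- The key lemma: a transitive GCA is mixing (window form). -/
lemma mixing_key (hd : 0 < d) [Finite G] [TopologicalSpace G] [DiscreteTopology G]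
    (F : ((Fin d → ℤ) → G) → ((Fin d → ℤ) → G))
    (hcont : Continuous F)
    (hhom : ∀ a b, F (a * b) = F a * F b)
    (htrans : TopologicallyTransitive F)
    (A B : Finset (Fin d → ℤ)) (a₀ b₀ : (Fin d → ℤ) → G) :
    ∃ N : ℕ, ∀ n ≥ N, ∃ x : (Fin d → ℤ) → G,
      (∀ i ∈ A, x i = a₀ i) ∧ (∀ i ∈ B, F^[n] x i = b₀ i) := by
  classical
  have hsurj : Function.Surjective F := trans_surj hd F hcont htrans
  have hih := iter_hom F hhom
  -- the homomorphism recording window data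
  let Φ : ℕ → (((Fin d → ℤ) → G) →* ((↥A → G) × (↥B → G))) := fun n =>
    { toFun := fun x => (proj A x, proj B (F^[n] x))
      map_one' := by
        show (proj A 1, proj B (F^[n] (1 : (Fin d → ℤ) → G))) = 1
        rw [iter_one F hhom n]
        rfl
      map_mul' := by
        intro x y
        simp only [Prod.mk_mul_mk, Prod.mk.injEq]
        exact ⟨rfl, by rw [hih n x y]; rfl⟩ }
  let S : ℕ → Subgroup ((↥A → G) × (↥B → G)) := fun n => (Φ n).range
  by_cases hC : ∃ N, ∀ n ≥ N, ∀ a : ↥A → G, (a, (1 : ↥B → G)) ∈ S n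
  · -- good case
    obtain ⟨N, hN⟩ := hC
    refine ⟨N, fun n hn => ?_⟩
    obtain ⟨w, hw⟩ := (hsurj.iterate n) (patExt B (proj B b₀))
    set a' : ↥A → G := (proj A a₀) * (proj A w)⁻¹ with ha'
    obtain ⟨k, hk⟩ := hN n hn a'
    have hk1 : proj A k = a' := congrArg Prod.fst hk
    have hk2 : proj B (F^[n] k) = 1 := congrArg Prod.snd hk
    refine ⟨k * w, ?_, ?_⟩
    · intro i hi
      have h := congrFun hk1 ⟨i, hi⟩
      simp only [proj, ha', Pi.mul_apply, Pi.inv_apply] at h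
      show k i * w i = a₀ i
      rw [h]
      rw [mul_assoc, inv_mul_cancel, mul_one]
    · intro i hi
      have h2 := congrFun hk2 ⟨i, hi⟩
      simp only [proj, Pi.one_apply] at h2
      rw [hih n k w]
      show F^[n] k i * F^[n] w i = b₀ i
      rw [h2, hw, one_mul]
      simp [patExt, proj, hi]
  · -- bad case : contradiction with transitivity
    exfalso
    push_neg at hC
    -- infinitely many bad n
    have hbadinf : {n : ℕ | ∃ a : ↥A → G, (a, (1 : ↥B → G)) ∉ S n}.Infinite := by
      by_contra hfin
      rw [Set.not_infinite] at hfin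
      obtain ⟨b, hb⟩ := hfin.bddAbove
      obtain ⟨n, hn, a, ha⟩ := hC (b + 1)
      have : n ≤ b := hb ⟨a, ha⟩
      omega
    haveI : Finite (Subgroup ((↥A → G) × (↥B → G))) :=
      Finite.of_injective _ SetLike.coe_injective
    haveI := hbadinf.to_subtype
    obtain ⟨⟨m₁, hm₁⟩, ⟨m₂, hm₂⟩, hne, heq⟩ :=
      Finite.exists_ne_map_eq_of_infinite
        (fun k : ↥{n : ℕ | ∃ a : ↥A → G, (a, (1 : ↥B → G)) ∉ S n} => S k.1)
    simp only at heq
    have hmne : m₁ ≠ m₂ := by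
      intro h; exact hne (Subtype.ext h)
    -- wlog n₁ < n₂
    obtain ⟨n₁, n₂, hlt, hb₁, hSeq⟩ :
        ∃ n₁ n₂, n₁ < n₂ ∧ (∃ a : ↥A → G, (a, (1 : ↥B → G)) ∉ S n₁) ∧ S n₁ = S n₂ := by
      rcases lt_or_gt_of_ne hmne with h | h
      · exact ⟨m₁, m₂, h, hm₁, heq⟩
      · exact ⟨m₂, m₁, h, hm₂, heq.symm⟩
    set p : ℕ := n₂ - n₁ with hp
    have hppos : 0 < p := by omega
    have hadd : n₁ + p = n₂ := by omega
    set R : Subgroup (↥A → G) := (S n₁).comap (MonoidHom.inl (↥A → G) (↥B → G)) with hRdef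
    -- the coset relation
    have hrel : ∀ x, (proj A (F^[p] x))⁻¹ * proj A x ∈ R := by
      intro x
      have e1 : (proj A (F^[p] x), proj B (F^[n₂] x)) ∈ S n₁ := by
        have hmem : Φ n₁ (F^[p] x) ∈ S n₁ := ⟨F^[p] x, rfl⟩
        have hcomp : F^[n₁] (F^[p] x) = F^[n₂] x := by
          rw [← Function.iterate_add_apply, hadd]
        have : Φ n₁ (F^[p] x) = (proj A (F^[p] x), proj B (F^[n₂] x)) := by
          show (proj A (F^[p] x), proj B (F^[n₁] (F^[p] x))) = _
          rw [hcomp]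
        rwa [this] at hmem
      have e2 : (proj A x, proj B (F^[n₂] x)) ∈ S n₁ := by
        rw [hSeq]; exact ⟨x, rfl⟩
      have hmm := mul_mem ((S n₁).inv_mem e1) e2
      have heq2 : ((proj A (F^[p] x), proj B (F^[n₂] x)))⁻¹ * (proj A x, proj B (F^[n₂] x))
          = ((proj A (F^[p] x))⁻¹ * proj A x, (1 : ↥B → G)) := by
        simp [Prod.ext_iff]
      rw [heq2] at hmm
      show (MonoidHom.inl (↥A → G) (↥B → G)) ((proj A (F^[p] x))⁻¹ * proj A x) ∈ S n₁
      simpa using hmm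
    -- iterate the coset relation
    have hqrel : ∀ (q : ℕ) (x), (proj A (F^[q * p] x))⁻¹ * proj A x ∈ R := by
      intro q
      induction q with
      | zero => intro x; simpa using one_mem R
      | succ q ih =>
        intro x
        have hsucc : (q + 1) * p = q * p + p := by ring
        have hit : F^[(q + 1) * p] x = F^[q * p] (F^[p] x) := by
          rw [hsucc, Function.iterate_add_apply]
        have h1 := ih (F^[p] x)
        have h2 := hrel x
        have h3 := mul_mem h1 h2
        rw [hit]
        have : (proj A (F^[q * p] (F^[p] x)))⁻¹ * proj A (F^[p] x) *
            ((proj A (F^[p] x))⁻¹ * proj A x)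
            = (proj A (F^[q * p] (F^[p] x)))⁻¹ * proj A x := by
          group
        rwa [this] at h3
    -- the witness outside R
    obtain ⟨a₁, ha₁⟩ := hb₁
    have ha₁R : a₁ ∉ R := by
      intro h
      exact ha₁ h
    -- the open sets contradicting transitivity
    set U : Set ((Fin d → ℤ) → G) := {x | ∀ j < p, proj A (F^[j] x) ∈ R} with hUdef
    set Vs : Set ((Fin d → ℤ) → G) := (proj A) ⁻¹' {a₁} with hVdef
    have hUopen : IsOpen U := by
      have hU2 : U = ⋂ j ∈ Finset.range p, (fun x => proj A (F^[j] x)) ⁻¹' {v | v ∈ R} := by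
        ext x
        simp [hUdef, Set.mem_iInter]
      rw [hU2]
      apply isOpen_biInter_finset
      intro j _
      exact (((proj_cont A).comp (iter_cont F hcont j))).isOpen_preimage _ (isOpen_discrete _)
    have hVopen : IsOpen Vs := (proj_cont A).isOpen_preimage _ (isOpen_discrete _)
    have hUne : U.Nonempty := by
      refine ⟨1, fun j _ => ?_⟩
      rw [iter_one F hhom j]
      have h1 : proj A (1 : (Fin d → ℤ) → G) = 1 := rfl
      rw [h1]
      exact one_mem R
    have hVne : Vs.Nonempty := ⟨patExt A a₁, by
      show proj A (patExt A a₁) ∈ ({a₁} : Set (↥A → G))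
      rw [proj_patExt]; rfl⟩
    obtain ⟨n, z, ⟨t, htU, rfl⟩, hzV⟩ := htrans U Vs hUopen hVopen hUne hVne
    -- derive the contradiction
    set q : ℕ := n / p with hq
    set j : ℕ := n % p with hj
    have hnpq : q * p + j = n := by
      rw [hq, hj, Nat.mul_comm]
      exact Nat.div_add_mod n p
    have hjp : j < p := Nat.mod_lt _ hppos
    have hFn : F^[n] t = F^[q * p] (F^[j] t) := by
      rw [← Function.iterate_add_apply, hnpq]
    have h1 := hqrel q (F^[j] t)
    have h2 := htU j hjp
    have h3 : proj A (F^[n] t) ∈ R := by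
      rw [hFn]
      have h4 := mul_mem h2 (R.inv_mem h1)
      have : proj A (F^[j] t) * ((proj A (F^[q * p] (F^[j] t)))⁻¹ * proj A (F^[j] t))⁻¹
          = proj A (F^[q * p] (F^[j] t)) := by
        group
      rwa [this] at h4
    have h5 : proj A (F^[n] t) = a₁ := hzV
    rw [h5] at h3
    exact ha₁R h3

/-- mixing for open sets -/
lemma mixing_open (hd : 0 < d) [Finite G] [TopologicalSpace G] [DiscreteTopology G]
    (F : ((Fin d → ℤ) → G) → ((Fin d → ℤ) → G))
    (hcont : Continuous F)
    (hhom : ∀ a b, F (a * b) = F a * F b)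
    (htrans : TopologicallyTransitive F)
    (U V : Set ((Fin d → ℤ) → G)) (hU : IsOpen U) (hV : IsOpen V)
    (hUne : U.Nonempty) (hVne : V.Nonempty) :
    ∃ N : ℕ, ∀ n ≥ N, ((F^[n] '' U) ∩ V).Nonempty := by
  obtain ⟨u, hu⟩ := hUne
  obtain ⟨v, hv⟩ := hVne
  obtain ⟨I, su, hsu, hsub⟩ := isOpen_pi_iff.mp hU u hu
  obtain ⟨J, sv, hsv, hsub'⟩ := isOpen_pi_iff.mp hV v hv
  obtain ⟨N, hN⟩ := mixing_key hd F hcont hhom htrans I J u v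
  refine ⟨N, fun n hn => ?_⟩
  obtain ⟨x, hxA, hxB⟩ := hN n hn
  refine ⟨F^[n] x, ⟨x, ?_, rfl⟩, ?_⟩
  · apply hsub
    intro i hi
    rw [hxA i hi]
    exact (hsu i hi).2
  · apply hsub'
    intro i hi
    rw [hxB i hi]
    exact (hsv i hi).2

end Aux

theorem stmt6 (d : ℕ) (hd : 0 < d)
    (G₁ : Type*) [Group G₁] [Finite G₁] [TopologicalSpace G₁] [DiscreteTopology G₁]
    (G₂ : Type*) [Group G₂] [Finite G₂] [TopologicalSpace G₂] [DiscreteTopology G₂]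
    (F₁ : ((Fin d → ℤ) → G₁) → ((Fin d → ℤ) → G₁))
    (hF₁cont : Continuous F₁)
    (hF₁hom : ∀ a b : (Fin d → ℤ) → G₁, F₁ (a * b) = F₁ a * F₁ b)
    (hF₁shift : ∀ (u : Fin d → ℤ) (c : (Fin d → ℤ) → G₁),
      F₁ (fun v => c (v + u)) = fun v => F₁ c (v + u))
    (hF₁trans : TopologicallyTransitive F₁)
    (F₂ : ((Fin d → ℤ) → G₂) → ((Fin d → ℤ) → G₂))
    (hF₂cont : Continuous F₂)
    (hF₂hom : ∀ a b : (Fin d → ℤ) → G₂, F₂ (a * b) = F₂ a * F₂ b)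
    (hF₂shift : ∀ (u : Fin d → ℤ) (c : (Fin d → ℤ) → G₂),
      F₂ (fun v => c (v + u)) = fun v => F₂ c (v + u))
    (hF₂trans : TopologicallyTransitive F₂) :
    TopologicallyTransitive (fun p : ((Fin d → ℤ) → G₁) × ((Fin d → ℤ) → G₂) =>
      (F₁ p.1, F₂ p.2)) := by
  intro U V hU hV hUne hVne
  obtain ⟨u, hu⟩ := hUne
  obtain ⟨v, hv⟩ := hVne
  obtain ⟨U₁, U₂, hU₁, hU₂, hu₁, hu₂, hUsub⟩ :=
    isOpen_prod_iff.mp hU u.1 u.2 (by simpa using hu)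
  obtain ⟨V₁, V₂, hV₁, hV₂, hv₁, hv₂, hVsub⟩ :=
    isOpen_prod_iff.mp hV v.1 v.2 (by simpa using hv)
  obtain ⟨N₁, hN₁⟩ := mixing_open hd F₁ hF₁cont hF₁hom hF₁trans U₁ V₁ hU₁ hV₁ ⟨u.1, hu₁⟩ ⟨v.1, hv₁⟩
  obtain ⟨N₂, hN₂⟩ := mixing_open hd F₂ hF₂cont hF₂hom hF₂trans U₂ V₂ hU₂ hV₂ ⟨u.2, hu₂⟩ ⟨v.2, hv₂⟩
  set n := max N₁ N₂ with hn
  obtain ⟨z₁, ⟨x₁, hx₁, hz₁eq⟩, hz₁⟩ := hN₁ n (le_max_left _ _)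
  obtain ⟨z₂, ⟨x₂, hx₂, hz₂eq⟩, hz₂⟩ := hN₂ n (le_max_right _ _)
  have hiter : ∀ (m : ℕ) (p : ((Fin d → ℤ) → G₁) × ((Fin d → ℤ) → G₂)),
      (fun p : ((Fin d → ℤ) → G₁) × ((Fin d → ℤ) → G₂) => (F₁ p.1, F₂ p.2))^[m] p
        = (F₁^[m] p.1, F₂^[m] p.2) := by
    intro m
    induction m with
    | zero => intro p; simp
    | succ m ih =>
      intro p
      rw [Function.iterate_succ_apply', ih p, Function.iterate_succ_apply',
        Function.iterate_succ_apply']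
  refine ⟨n, (z₁, z₂), ⟨(x₁, x₂), hUsub ⟨hx₁, hx₂⟩, ?_⟩, hVsub ⟨hz₁, hz₂⟩⟩
  rw [hiter n (x₁, x₂)]
  simp [hz₁eq, hz₂eq]
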